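/- Let p_1, …, p_n ∈ ℝ^d, let ε > 0, let t ≤ n, and for each i let w_i = (p_i, ε·u_i) ∈ ℝ^{d+t} where u_i ∈ ℝ^t, and suppose that for each coordinate k ∈ {1, …, t} the vector ((u_1)_k, …, (u_n)_k) ∈ ℝ^n has Euclidean norm at most 1. Then the squared Euclidean distance from 0 to conv{w_1, …, w_n} is at most the squared Euclidean distance from 0 to conv{p_1, …, p_n} plus ε²·n. -/

import Mathlib

/-- Lifting points by `ε`-small extra coordinates increases the squared distance from the
origin to the convex hull by at most `ε²·n`: if `w_i = (p_i, ε·u_i) ∈ ℝ^(d+t)` and for each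
coordinate `k` the vector `((u_1)_k, …, (u_n)_k)` has Euclidean norm at most `1`, then
`d(0, conv{w_i})² ≤ d(0, conv{p_i})² + ε²·n`. -/
theorem stmt_16 (d t n : ℕ) (htn : t ≤ n) (ε : ℝ) (hε : 0 < ε)
    (p : Fin n → EuclideanSpace ℝ (Fin d))
    (u : Fin n → Fin t → ℝ)
    (hu : ∀ k : Fin t, Real.sqrt (∑ i, u i k ^ 2) ≤ 1)
    (w : Fin n → EuclideanSpace ℝ (Fin (d + t)))
    (hw₁ : ∀ i (k : Fin d), w i (Fin.castAdd t k) = p i k)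
    (hw₂ : ∀ i (k : Fin t), w i (Fin.natAdd d k) = ε * u i k) :
    sInf {r : ℝ | ∃ q ∈ convexHull ℝ (Set.range w), r = ‖q‖ ^ 2} ≤
      sInf {r : ℝ | ∃ q ∈ convexHull ℝ (Set.range p), r = ‖q‖ ^ 2} + ε ^ 2 * n := by
  rcases Nat.eq_zero_or_pos n with hn | hn
  · subst hn
    simp [Set.range_eq_empty, convexHull_empty, Real.sInf_empty]
  have key : ∀ b ∈ {r : ℝ | ∃ q ∈ convexHull ℝ (Set.range p), r = ‖q‖ ^ 2},
      sInf {r : ℝ | ∃ q ∈ convexHull ℝ (Set.range w), r = ‖q‖ ^ 2} ≤ b + ε ^ 2 * n := by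
    rintro b ⟨q, hq, rfl⟩
    rw [convexHull_range_eq_exists_affineCombination] at hq
    obtain ⟨s, wt, h0, h1, hq⟩ := hq
    set a : Fin n → ℝ := fun i => if i ∈ s then wt i else 0 with ha
    have ha0 : ∀ i, 0 ≤ a i := by
      intro i; simp only [ha]; split
      · exact h0 _ ‹_›
      · exact le_refl 0
    have ha1 : ∑ i, a i = 1 := by
      rw [← h1, Finset.sum_ite_mem, Finset.univ_inter]
    have hqe : q = ∑ i, a i • p i := by
      rw [← hq, Finset.affineCombination_eq_linear_combination s p wt h1]
      rw [← Finset.sum_subset (Finset.subset_univ s)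
        (fun i _ hi => by simp [ha, hi])]
      exact Finset.sum_congr rfl fun i hi => by simp [ha, hi]
    -- the lifted point
    set q' : EuclideanSpace ℝ (Fin (d + t)) := ∑ i, a i • w i with hq'
    have hq'mem : q' ∈ convexHull ℝ (Set.range w) := by
      rw [hq', ← Finset.centerMass_eq_of_sum_1 _ w ha1]
      exact Finset.centerMass_mem_convexHull _ (fun i _ => ha0 i)
        (by rw [ha1]; norm_num) (fun i _ => Set.mem_range_self i)
    -- coordinates of q'
    have hcoord : ∀ j : Fin (d + t), q' j = ∑ i, a i * w i j := by
      intro j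
      rw [hq', WithLp.ofLp_sum]
      exact (Finset.sum_apply j Finset.univ _).trans (Finset.sum_congr rfl fun i _ => rfl)
    -- coordinates of q
    have hqcoord : ∀ k : Fin d, q k = ∑ i, a i * p i k := by
      intro k
      rw [hqe, WithLp.ofLp_sum]
      exact (Finset.sum_apply k Finset.univ _).trans (Finset.sum_congr rfl fun i _ => rfl)
    -- the norm bound
    have hnorm : ‖q'‖ ^ 2 ≤ ‖q‖ ^ 2 + ε ^ 2 * n := by
      have hq'sq : ‖q'‖ ^ 2 = ∑ j, (q' j) ^ 2 := by
        rw [EuclideanSpace.norm_eq, Real.sq_sqrt (by positivity)]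
        simp [sq_abs]
      have hqsq : ‖q‖ ^ 2 = ∑ k, (q k) ^ 2 := by
        rw [EuclideanSpace.norm_eq, Real.sq_sqrt (by positivity)]
        simp [sq_abs]
      rw [hq'sq, hqsq, Fin.sum_univ_add (fun j : Fin (d + t) => (q' j) ^ 2)]
      have h1' : ∑ k : Fin d, (q' (Fin.castAdd t k)) ^ 2 = ∑ k, (q k) ^ 2 := by
        refine Finset.sum_congr rfl fun k _ => ?_
        rw [hcoord, hqcoord]
        congr 1
        exact Finset.sum_congr rfl fun i _ => by rw [hw₁]
      rw [h1']
      have h2' : ∑ k : Fin t, (q' (Fin.natAdd d k)) ^ 2 ≤ ε ^ 2 * n := by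
        have hsa : ∑ i, (a i) ^ 2 ≤ 1 := by
          calc ∑ i, (a i) ^ 2 ≤ ∑ i, a i := by
                refine Finset.sum_le_sum fun i _ => ?_
                have hai : a i ≤ 1 := by
                  rw [← ha1]
                  exact Finset.single_le_sum (fun j _ => ha0 j) (Finset.mem_univ i)
                nlinarith [ha0 i]
            _ = 1 := ha1
        have hterm : ∀ k : Fin t, (q' (Fin.natAdd d k)) ^ 2 ≤ ε ^ 2 := by
          intro k
          rw [hcoord]
          have : ∑ i, a i * w i (Fin.natAdd d k) = ε * ∑ i, a i * u i k := by
            rw [Finset.mul_sum]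
            exact Finset.sum_congr rfl fun i _ => by rw [hw₂]; ring
          rw [this, mul_pow]
          have hcs : (∑ i, a i * u i k) ^ 2 ≤ (∑ i, (a i) ^ 2) * ∑ i, (u i k) ^ 2 :=
            Finset.sum_mul_sq_le_sq_mul_sq _ _ _
          have hus : ∑ i, (u i k) ^ 2 ≤ 1 := by
            have hS : (0:ℝ) ≤ ∑ i, (u i k) ^ 2 := by positivity
            nlinarith [hu k, Real.sq_sqrt hS, Real.sqrt_nonneg (∑ i, (u i k) ^ 2)]
          have hS2 : (0:ℝ) ≤ ∑ i, (u i k) ^ 2 := by positivity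
          have hsa0 : (0:ℝ) ≤ ∑ i, (a i) ^ 2 := by positivity
          have hone : (∑ i, (a i) ^ 2) * ∑ i, (u i k) ^ 2 ≤ 1 :=
            mul_le_one₀ hsa hS2 hus
          nlinarith [sq_nonneg ε]
        calc ∑ k : Fin t, (q' (Fin.natAdd d k)) ^ 2 ≤ ∑ _k : Fin t, ε ^ 2 :=
              Finset.sum_le_sum fun k _ => hterm k
          _ = ε ^ 2 * t := by simp [mul_comm]
          _ ≤ ε ^ 2 * n := by
              have : (t:ℝ) ≤ n := Nat.cast_le.mpr htn
              nlinarith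
      linarith
    have hle : sInf {r : ℝ | ∃ q ∈ convexHull ℝ (Set.range w), r = ‖q‖ ^ 2} ≤ ‖q'‖ ^ 2 :=
      csInf_le ⟨0, fun r ⟨z, _, hz⟩ => hz ▸ sq_nonneg _⟩ ⟨q', hq'mem, rfl⟩
    linarith
  have hBne : {r : ℝ | ∃ q ∈ convexHull ℝ (Set.range p), r = ‖q‖ ^ 2}.Nonempty := by
    refine ⟨‖p ⟨0, hn⟩‖ ^ 2, p ⟨0, hn⟩, ?_, rfl⟩
    exact subset_convexHull ℝ _ (Set.mem_range_self _)
  rw [← sub_le_iff_le_add]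
  exact le_csInf hBne fun b hb => by linarith [key b hb]
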